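/- Let k ≥ 1 and 1 ≤ s ≤ k, let 1 ≤ q ≤ s, and let π_1 + … + π_q = s be a partition of s into positive integers. Let Q be the graph whose vertex set is the disjoint union of sets B_1, …, B_q with |B_i| = π_i and sets H_1, …, H_q each of size k − s, in which all vertices of B_1 ∪ … ∪ B_q are pairwise adjacent, each H_i induces a complete graph, and every vertex of B_i is adjacent to every vertex of H_i for each i (with no other adjacencies). Then for every vertex v of Q, there exists a k-ranking of Q in which v is the unique vertex with label 1. -/

import Mathlib

/-- A `k`-ranking of a simple graph `G`: a labeling of the vertices with values from
`{1, …, k}` such that every path joining two distinct vertices with the same label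
contains a vertex with a strictly higher label. -/
def IsRanking {V : Type*} (G : SimpleGraph V) (k : ℕ) (f : V → ℕ) : Prop :=
  (∀ v, 1 ≤ f v ∧ f v ≤ k) ∧
  ∀ ⦃u v : V⦄ (p : G.Walk u v), p.IsPath → u ≠ v → f u = f v →
    ∃ w ∈ p.support, f u < f w

/-- The tree-depth of `G`: the least `k` such that `G` admits a `k`-ranking. -/
noncomputable def treedepth {V : Type*} (G : SimpleGraph V) : ℕ :=
  sInf {k | ∃ f, IsRanking G k f}

/-- The block index of a vertex of the graph `Q`: vertices are either in one of the
parts `B_i` of the central clique (left summand, `Sum.inl ⟨i, _⟩`) or in the outer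
clique `H_i` (right summand, `Sum.inr (i, _)`). -/
def qIdx {q h : ℕ} {π : Fin q → ℕ} : ((Σ i : Fin q, Fin (π i)) ⊕ (Fin q × Fin h)) → Fin q
  | Sum.inl x => x.1
  | Sum.inr x => x.1

/-- The graph `Q`: the central clique `B_1 ∪ ⋯ ∪ B_q` (with `|B_i| = π i`) together with
disjoint cliques `H_1, …, H_q` each of size `h`, where every vertex of `B_i` is joined to
every vertex of `H_i`. Two distinct vertices are adjacent iff they both lie in the
central clique, or they have the same block index. -/
def Qgraph (q h : ℕ) (π : Fin q → ℕ) :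
    SimpleGraph ((Σ i : Fin q, Fin (π i)) ⊕ (Fin q × Fin h)) where
  Adj x y := x ≠ y ∧ ((x.isLeft ∧ y.isLeft) ∨ qIdx x = qIdx y)
  symm := by
    constructor
    rintro x y ⟨hne, h | h⟩
    · exact ⟨hne.symm, Or.inl ⟨h.2, h.1⟩⟩
    · exact ⟨hne.symm, Or.inr h.symm⟩
  loopless := ⟨fun x hx => hx.1 rfl⟩

lemma qgraph_exit {q h : ℕ} {π : Fin q → ℕ}
    {u w : (Σ i : Fin q, Fin (π i)) ⊕ (Fin q × Fin h)}
    (p : (Qgraph q h π).Walk u w) (i : Fin q)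
    (hu : ∃ j, u = Sum.inr (i, j)) (hw : ∀ j, w ≠ Sum.inr (i, j)) :
    ∃ b, Sum.inl ⟨i, b⟩ ∈ p.support := by
  induction p with
  | nil => obtain ⟨j, rfl⟩ := hu; exact absurd rfl (hw j)
  | @cons a m c ha p ih =>
    obtain ⟨j, rfl⟩ := hu
    by_cases hm : ∃ j', m = Sum.inr (i, j')
    · obtain ⟨b, hb⟩ := ih hm hw
      exact ⟨b, by simp [SimpleGraph.Walk.support_cons, hb]⟩
    · have h2 := (ha : _ ∧ _).2
      rcases h2 with hL | hq
      · simp at hL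
      · have hqm : qIdx m = i := by simpa [qIdx] using hq.symm
        match m, hqm with
        | Sum.inl ⟨i', b⟩, hqm =>
          have : i' = i := by simpa [qIdx] using hqm
          subst this
          exact ⟨b, by simp [SimpleGraph.Walk.support_cons]⟩
        | Sum.inr (i', j'), hqm =>
          have : i' = i := by simpa [qIdx] using hqm
          exact absurd ⟨j', by rw [this]⟩ hm

lemma ranking_aux (k : ℕ) {q h : ℕ} {π : Fin q → ℕ}
    (b0 : Σ i : Fin q, Fin (π i))
    (fB : (Σ i : Fin q, Fin (π i)) → ℕ) (fH : Fin q → Fin h → ℕ)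
    (hfBinj : Function.Injective fB)
    (hfB0 : 1 ≤ fB b0 ∧ fB b0 ≤ h + 1)
    (hfB : ∀ b, b ≠ b0 → h + 2 ≤ fB b ∧ fB b ≤ k)
    (hk1 : h + 1 ≤ k)
    (hfHinj : ∀ i, Function.Injective (fH i))
    (hfH : ∀ i j, 1 ≤ fH i j ∧ fH i j ≤ h + 1)
    (hmix : ∀ i j, fH i j = fB b0 → i ≠ b0.1) :
    IsRanking (Qgraph q h π) k (Sum.elim fB (fun x => fH x.1 x.2)) := by
  have hBig : ∀ (i : Fin q) (b : Fin (π i)), i ≠ b0.1 →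
      h + 2 ≤ fB ⟨i, b⟩ := by
    intro i b hi
    have : (⟨i, b⟩ : Σ i : Fin q, Fin (π i)) ≠ b0 := by
      intro hh; exact hi (congrArg Sigma.fst hh)
    exact (hfB _ this).1
  constructor
  · rintro (b | ⟨i, j⟩) <;> simp only [Sum.elim_inl, Sum.elim_inr]
    · by_cases hb : b = b0
      · subst hb; exact ⟨hfB0.1, le_trans hfB0.2 hk1⟩
      · exact ⟨by have := (hfB b hb).1; omega, (hfB b hb).2⟩
    · exact ⟨(hfH i j).1, le_trans (hfH i j).2 hk1⟩
  · rintro (a | ⟨i, j⟩) (b | ⟨i', j'⟩) p hp hne heq <;>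
      simp only [Sum.elim_inl, Sum.elim_inr] at heq ⊢
    · exact absurd (congrArg Sum.inl (hfBinj heq)) hne
    · -- u = inl a, w = inr (i', j')
      have hle : fB a ≤ h + 1 := by rw [heq]; exact (hfH i' j').2
      have ha0 : a = b0 := by
        by_contra hab
        have := (hfB a hab).1
        omega
      have hi' : i' ≠ b0.1 := hmix i' j' (by rw [← ha0]; exact heq.symm)
      obtain ⟨c, hc⟩ := qgraph_exit p.reverse i' ⟨j', rfl⟩ (fun jj hj => by simp at hj)
      refine ⟨Sum.inl ⟨i', c⟩, ?_, ?_⟩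
      · simpa [SimpleGraph.Walk.support_reverse] using hc
      · have := hBig i' c hi'
        simp only [Sum.elim_inl]
        omega
    · -- u = inr (i, j), w = inl b
      have hle : fH i j ≤ h + 1 := (hfH i j).2
      have hb0 : b = b0 := by
        by_contra hab
        have := (hfB b hab).1
        omega
      have hi : i ≠ b0.1 := hmix i j (by rw [← hb0]; exact heq)
      obtain ⟨c, hc⟩ := qgraph_exit p i ⟨j, rfl⟩ (fun jj hj => by simp at hj)
      refine ⟨Sum.inl ⟨i, c⟩, hc, ?_⟩
      have := hBig i c hi
      simp only [Sum.elim_inl]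
      omega
    · -- both inr
      by_cases hii : i = i'
      · subst hii
        have hjj : j = j' := hfHinj i (by exact_mod_cast heq)
        exact absurd (by rw [hjj]) hne
      · have hle : fH i j ≤ h + 1 := (hfH i j).2
        by_cases hib : i = b0.1
        · obtain ⟨c, hc⟩ := qgraph_exit p.reverse i' ⟨j', rfl⟩
            (fun jj hj => by simp at hj; exact hii hj.1)
          refine ⟨Sum.inl ⟨i', c⟩, ?_, ?_⟩
          · simpa [SimpleGraph.Walk.support_reverse] using hc
          · have := hBig i' c (fun hh => hii (hib.trans hh.symm))
            simp only [Sum.elim_inl]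
            omega
        · obtain ⟨c, hc⟩ := qgraph_exit p i ⟨j, rfl⟩
            (fun jj hj => by simp at hj; exact hii hj.1.symm)
          refine ⟨Sum.inl ⟨i, c⟩, hc, ?_⟩
          have := hBig i c hib
          simp only [Sum.elim_inl]
          omega

/-- For `1 ≤ s ≤ k`, `1 ≤ q ≤ s`, and a partition `π_1 + ⋯ + π_q = s` of `s` into
positive integers, every vertex of the graph `Q` (built from cliques `B_i` with
`|B_i| = π i` and `H_i` with `|H_i| = k − s`) is the unique vertex with label 1 in some
`k`-ranking of `Q`. -/
theorem Qgraph_oneUnique (k s q : ℕ) (hk : 1 ≤ k) (hs1 : 1 ≤ s) (hsk : s ≤ k)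
    (hq1 : 1 ≤ q) (hqs : q ≤ s) (π : Fin q → ℕ) (hπ : ∀ i, 1 ≤ π i)
    (hsum : ∑ i, π i = s)
    (v : (Σ i : Fin q, Fin (π i)) ⊕ (Fin q × Fin (k - s))) :
    ∃ f : ((Σ i : Fin q, Fin (π i)) ⊕ (Fin q × Fin (k - s))) → ℕ,
      IsRanking (Qgraph q (k - s) π) k f ∧ f v = 1 ∧ ∀ w, f w = 1 → w = v := by
  have hcard : Fintype.card (Σ i : Fin q, Fin (π i)) = s := by
    simp [Fintype.card_sigma, hsum]
  have hk1 : k - s + 1 ≤ k := by omega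
  rcases v with b | ⟨i0, j0⟩
  · -- v in the central clique
    let e := Fintype.equivFinOfCardEq hcard
    let E : (Σ i : Fin q, Fin (π i)) ≃ Fin s := e.trans (Equiv.swap (e b) ⟨0, hs1⟩)
    have hE0 : E b = ⟨0, hs1⟩ := by simp [E, Equiv.swap_apply_left]
    have hEpos : ∀ a, a ≠ b → 1 ≤ (E a).val ∧ (E a).val ≤ s - 1 := by
      intro a ha
      have h1 : E a ≠ ⟨0, hs1⟩ := fun hh => ha (E.injective (hh.trans hE0.symm))
      have h2 : (E a).val ≠ 0 := fun hh => h1 (Fin.ext hh)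
      have h3 : (E a).val < s := (E a).2
      omega
    set fB : (Σ i : Fin q, Fin (π i)) → ℕ :=
      fun a => if a = b then 1 else (k - s) + 1 + (E a).val with hfB
    set fH : Fin q → Fin (k - s) → ℕ := fun _ j => j.val + 2 with hfH
    refine ⟨Sum.elim fB (fun x => fH x.1 x.2),
      ranking_aux k b fB fH ?_ ?_ ?_ hk1 ?_ ?_ ?_, ?_, ?_⟩
    · intro a a' haa
      by_cases h1 : a = b <;> by_cases h2 : a' = b <;>
        simp [fB, h1, h2] at haa ⊢
      · have := hEpos a' h2; omega
      · have := hEpos a h1; omega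
      · exact E.injective (Fin.ext haa)
    · constructor <;> simp [fB] <;> omega
    · intro a ha
      have := hEpos a ha
      simp [fB, ha] <;> omega
    · intro i a a' haa
      simp [fH] at haa
      exact Fin.ext haa
    · intro i j
      have := j.2
      constructor <;> simp [fH] <;> omega
    · intro i j hij
      exfalso
      simp [fB, fH] at hij
    · simp [fB]
    · rintro (a | ⟨i, j⟩) hw
      · by_cases ha : a = b
        · rw [ha]
        · exfalso
          simp only [Sum.elim_inl, hfB, if_neg ha] at hw
          have := hEpos a ha
          omega
      · exfalso
        simp only [Sum.elim_inr, hfH] at hw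
        omega
  · -- v in an outer clique H_{i0}
    have hpos : 0 < k - s := j0.pos
    let b0 : Σ i : Fin q, Fin (π i) := ⟨i0, ⟨0, hπ i0⟩⟩
    let e := Fintype.equivFinOfCardEq hcard
    let E : (Σ i : Fin q, Fin (π i)) ≃ Fin s := e.trans (Equiv.swap (e b0) ⟨0, hs1⟩)
    have hE0 : E b0 = ⟨0, hs1⟩ := by simp [E, Equiv.swap_apply_left]
    have hEpos : ∀ a, a ≠ b0 → 1 ≤ (E a).val ∧ (E a).val ≤ s - 1 := by
      intro a ha
      have h1 : E a ≠ ⟨0, hs1⟩ := fun hh => ha (E.injective (hh.trans hE0.symm))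
      have h2 : (E a).val ≠ 0 := fun hh => h1 (Fin.ext hh)
      have h3 : (E a).val < s := (E a).2
      omega
    let z : Fin (k - s) := ⟨0, hpos⟩
    set fB : (Σ i : Fin q, Fin (π i)) → ℕ :=
      fun a => if a = b0 then (k - s) + 1 else (k - s) + 1 + (E a).val with hfB
    set fH : Fin q → Fin (k - s) → ℕ :=
      fun i j => if i = i0 then ((Equiv.swap j0 z) j).val + 1 else j.val + 2 with hfH
    refine ⟨Sum.elim fB (fun x => fH x.1 x.2),
      ranking_aux k b0 fB fH ?_ ?_ ?_ hk1 ?_ ?_ ?_, ?_, ?_⟩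
    · intro a a' haa
      by_cases h1 : a = b0 <;> by_cases h2 : a' = b0 <;>
        simp [fB, h1, h2] at haa ⊢
      · have := hEpos a' h2; omega
      · have := hEpos a h1; omega
      · exact E.injective (Fin.ext haa)
    · constructor <;> simp [fB] <;> omega
    · intro a ha
      have := hEpos a ha
      simp [fB, ha] <;> omega
    · intro i a a' haa
      by_cases hi : i = i0
      · simp only [hfH, if_pos hi] at haa
        exact (Equiv.swap j0 z).injective (Fin.ext (by omega))
      · simp only [hfH, if_neg hi] at haa
        exact Fin.ext (by omega)
    · intro i j
      by_cases hi : i = i0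
      · simp only [hfH, if_pos hi]
        have := ((Equiv.swap j0 z) j).2
        omega
      · simp only [hfH, if_neg hi]
        have := j.2
        omega
    · intro i j hij
      by_cases hi : i = i0
      · exfalso
        simp only [hfH, hfB, if_pos hi, if_pos rfl] at hij
        have := ((Equiv.swap j0 z) j).2
        omega
      · exact hi
    · show fH i0 j0 = 1
      simp only [hfH, if_pos rfl, Equiv.swap_apply_left]
      rfl
    · rintro (a | ⟨i, j⟩) hw
      · exfalso
        by_cases ha : a = b0
        · simp only [Sum.elim_inl, hfB, if_pos ha] at hw
          omega
        · simp only [Sum.elim_inl, hfB, if_neg ha] at hw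
          have := hEpos a ha
          omega
      · by_cases hi : i = i0
        · simp only [Sum.elim_inr, hfH, if_pos hi] at hw
          have hz0 : ((Equiv.swap j0 z) j).val = 0 := by omega
          have hz : (Equiv.swap j0 z) j = z := Fin.ext hz0
          have hj : j = j0 := (Equiv.swap j0 z).injective
            (hz.trans (Equiv.swap_apply_left j0 z).symm)
          rw [hi, hj]
        · exfalso
          simp only [Sum.elim_inr, hfH, if_neg hi] at hw
          omega
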